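/- Assume m > n. None of the four quasi-invariants q⁰ = 1, q¹ = (z^N+w^N)^{2n+1}, q² = (z^N−w^N)^{2m+1}, q³ = q¹·q² belongs to the ideal I of the ring Q of quasi-invariants generated by the two elements z·w and z^{2N}+w^{2N}. -/

import Mathlib

open MvPolynomial Finset

noncomputable section

/-- The polynomial ring `R = ℂ[z,w]`. -/
abbrev R2 : Type := MvPolynomial (Fin 2) ℂ

/-- `z`, the first variable. -/
def zP : R2 := X 0

/-- `w`, the second variable (playing the role of `z̄`). -/
def wP : R2 := X 1

/-- `ε = exp(πi/N)`, a primitive `2N`-th root of unity. -/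
def eps (N : ℕ) : ℂ := Complex.exp ((Real.pi : ℂ) * Complex.I / (N : ℂ))

/-- The reflection `σⱼ : z ↦ ε^j w, w ↦ ε^{-j} z` as a `ℂ`-algebra endomorphism. -/
def dihRefl (N j : ℕ) : R2 →ₐ[ℂ] R2 :=
  aeval (fun k : Fin 2 => if k = 0 then C (eps N ^ j) * X 1 else C (eps N ^ (-(j : ℤ))) * X 0)

/-- The multiplicity `mⱼ`: `m` for even `j`, `n` for odd `j`. -/
def mult (m n j : ℕ) : ℕ := if Even j then m else n

/-- Quasi-invariance for the dihedral system `I₂(2N)` with multiplicities `(m,n)`. -/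
def IsQuasiInv (N m n : ℕ) (p : R2) : Prop :=
  ∀ j < 2 * N, (zP - C (eps N ^ j) * wP) ^ (2 * mult m n j + 1) ∣ dihRefl N j p - p

/-- Membership in the ideal `I` of the ring `Q` of quasi-invariants generated by
`z·w` and `z^{2N}+w^{2N}`: an element of `Q` lies in `I` iff it can be written as
`u·(z·w) + v·(z^{2N}+w^{2N})` with `u, v ∈ Q`. -/
def MemIdealI (N m n : ℕ) (p : R2) : Prop :=
  ∃ u v : R2, IsQuasiInv N m n u ∧ IsQuasiInv N m n v ∧
    p = u * (zP * wP) + v * (zP ^ (2 * N) + wP ^ (2 * N))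

namespace QIDih

abbrev P1 : Type := Polynomial ℂ
abbrev P2 : Type := Polynomial (Polynomial ℂ)

-- ε facts
lemma eps_ne_zero (N : ℕ) : eps N ≠ 0 := Complex.exp_ne_zero _

lemma eps_pow_two_N (N : ℕ) (hN : 1 ≤ N) : eps N ^ (2 * N) = 1 := by
  rw [eps, ← Complex.exp_nat_mul]
  have hNC : (N : ℂ) ≠ 0 := Nat.cast_ne_zero.mpr (by omega)
  have : ((2 * N : ℕ) : ℂ) * ((Real.pi : ℂ) * Complex.I / (N : ℂ)) = 2 * (Real.pi : ℂ) * Complex.I := by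
    push_cast; field_simp
  rw [this, Complex.exp_two_pi_mul_I]

lemma eps_pow_N (N : ℕ) (hN : 1 ≤ N) : eps N ^ N = -1 := by
  rw [eps, ← Complex.exp_nat_mul]
  have hNC : (N : ℂ) ≠ 0 := Nat.cast_ne_zero.mpr (by omega)
  have : ((N : ℕ) : ℂ) * ((Real.pi : ℂ) * Complex.I / (N : ℂ)) = (Real.pi : ℂ) * Complex.I := by
    field_simp
  rw [this, Complex.exp_pi_mul_I]

lemma eps_sq_pow_eq_one_iff (N : ℕ) (hN : 1 ≤ N) (a : ℕ) :
    ((eps N ^ 2) ^ a = 1) ↔ N ∣ a := by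
  have hNC : (N : ℂ) ≠ 0 := Nat.cast_ne_zero.mpr (by omega)
  have hπ : (Real.pi : ℂ) ≠ 0 := Complex.ofReal_ne_zero.mpr Real.pi_ne_zero
  have hI : Complex.I ≠ 0 := Complex.I_ne_zero
  rw [eps, ← Complex.exp_nat_mul, ← Complex.exp_nat_mul, Complex.exp_eq_one_iff]
  constructor
  · rintro ⟨k, hk⟩
    have hcast : (a : ℂ) = (k : ℂ) * N := by
      field_simp at hk
      have h2 : (2:ℂ) * ((Real.pi:ℂ) * Complex.I) ≠ 0 := by
        simp [hπ, hI]
      have hk' : (a : ℂ) * (2 * ((Real.pi:ℂ) * Complex.I)) =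
          ((k : ℂ) * N) * (2 * ((Real.pi:ℂ) * Complex.I)) := by
        push_cast at hk; linear_combination ((Real.pi:ℂ) * Complex.I) * hk
      exact mul_right_cancel₀ h2 hk'
    have hz : (a : ℤ) = k * N := by exact_mod_cast hcast
    have : (N : ℤ) ∣ (a : ℤ) := ⟨k, by rw [hz, mul_comm]⟩
    exact_mod_cast this
  · rintro ⟨b, rfl⟩
    refine ⟨b, ?_⟩
    push_cast
    field_simp


lemma eps_geom_sum (N : ℕ) (hN : 1 ≤ N) (a : ℕ) :
    ∑ i ∈ range N, ((eps N ^ 2) ^ a) ^ i = if N ∣ a then (N : ℂ) else 0 := by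
  by_cases h : N ∣ a
  · simp only [h, if_true]
    rw [(eps_sq_pow_eq_one_iff N hN a).mpr h]
    simp
  · simp only [h, if_false]
    have hne : (eps N ^ 2) ^ a ≠ 1 := fun hc => h ((eps_sq_pow_eq_one_iff N hN a).mp hc)
    rw [geom_sum_eq hne]
    have : ((eps N ^ 2) ^ a) ^ N = 1 := by
      rw [← pow_mul, ← pow_mul]
      have he : 2 * (a * N) = (2 * N) * a := by ring
      rw [he, pow_mul, eps_pow_two_N N hN, one_pow]
    rw [this]
    simp

-- pair finsupp helpers
lemma pair_apply0 (a b : ℕ) :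
    ((Finsupp.single (0 : Fin 2) a + Finsupp.single 1 b : Fin 2 →₀ ℕ)) 0 = a := by
  simp [Finsupp.single_apply]

lemma pair_apply1 (a b : ℕ) :
    ((Finsupp.single (0 : Fin 2) a + Finsupp.single 1 b : Fin 2 →₀ ℕ)) 1 = b := by
  simp [Finsupp.single_apply]

lemma pair_decomp (d : Fin 2 →₀ ℕ) :
    Finsupp.single (0 : Fin 2) (d 0) + Finsupp.single 1 (d 1) = d := by
  ext i
  fin_cases i
  · simpa using pair_apply0 (d 0) (d 1)
  · simpa using pair_apply1 (d 0) (d 1)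

/-- substitution z ↦ C u₀ * W, w ↦ C u₁ * W into ℂ[x][W] -/
def theta (u : Fin 2 → P1) : R2 →ₐ[ℂ] P2 :=
  aeval (fun k : Fin 2 => Polynomial.C (u k) * Polynomial.X)

lemma theta_coeff (u : Fin 2 → P1) (t : ℕ) (p : R2) :
    (theta u p).coeff t =
      ∑ a ∈ range (t + 1),
        Polynomial.C (MvPolynomial.coeff (Finsupp.single 0 a + Finsupp.single 1 (t - a)) p) *
          (u 0 ^ a * u 1 ^ (t - a)) := by
  induction p using MvPolynomial.induction_on' with
  | add p q hp hq =>
    simp only [map_add, Polynomial.coeff_add, hp, hq, MvPolynomial.coeff_add, map_add,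
      add_mul, Finset.sum_add_distrib]
  | monomial d r =>
    rw [theta, aeval_monomial, Finsupp.prod_fintype _ _ (fun i => pow_zero _),
      Fin.prod_univ_two]
    have halg : (algebraMap ℂ P2) r = Polynomial.C (Polynomial.C r) := rfl
    have hLHS : ((algebraMap ℂ P2) r *
        ((Polynomial.C (u 0) * Polynomial.X) ^ d 0 * (Polynomial.C (u 1) * Polynomial.X) ^ d 1)).coeff t
        = if d 0 + d 1 = t then Polynomial.C r * (u 0 ^ d 0 * u 1 ^ d 1) else 0 := by
      rw [halg, mul_pow, mul_pow, ← Polynomial.C_pow, ← Polynomial.C_pow]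
      have : Polynomial.C (Polynomial.C r) *
          (Polynomial.C (u 0 ^ d 0) * Polynomial.X ^ d 0 * (Polynomial.C (u 1 ^ d 1) * Polynomial.X ^ d 1))
          = Polynomial.C (Polynomial.C r * (u 0 ^ d 0 * u 1 ^ d 1)) * Polynomial.X ^ (d 0 + d 1) := by
        rw [pow_add]; push_cast [map_mul]; ring
      rw [this, Polynomial.coeff_C_mul, Polynomial.coeff_X_pow]
      by_cases h : d 0 + d 1 = t
      · simp [h]
      · simp [h, Ne.symm h, fun hh : t = d 0 + d 1 => h hh.symm]
    rw [hLHS]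
    by_cases h : d 0 + d 1 = t
    · rw [Finset.sum_eq_single (d 0)]
      · rw [show t - d 0 = d 1 from by omega, MvPolynomial.coeff_monomial,
          if_pos (pair_decomp d).symm, if_pos h]
      · intro a ha hne
        rw [MvPolynomial.coeff_monomial, if_neg, map_zero, zero_mul]
        intro hd
        exact hne (by rw [hd]; exact (pair_apply0 a (t - a)).symm)
      · intro hd0
        exact absurd (Finset.mem_range.mpr (by omega)) hd0
    · rw [if_neg h, Finset.sum_eq_zero]
      intro a ha
      rw [MvPolynomial.coeff_monomial, if_neg, map_zero, zero_mul]
      intro hd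
      have h0 : d 0 = a := by rw [hd]; exact pair_apply0 a (t - a)
      have h1 : d 1 = t - a := by rw [hd]; exact pair_apply1 a (t - a)
      have hat : a ≤ t := Nat.lt_succ_iff.mp (Finset.mem_range.mp ha)
      omega


lemma theta_C (u : Fin 2 → P1) (c : ℂ) :
    theta u (C c) = Polynomial.C (Polynomial.C c) := by
  simp [theta, algHom_C, Polynomial.algebraMap_apply, Polynomial.algebraMap_eq]

lemma mirror_dvd (N m n : ℕ) (v : R2) (hv : IsQuasiInv N m n v) (t j : ℕ) (hj : j < 2 * N) :
    (Polynomial.X - 1 : P1) ^ (2 * mult m n j + 1) ∣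
      ∑ a ∈ range (t + 1),
        Polynomial.C (MvPolynomial.coeff (Finsupp.single 0 a + Finsupp.single 1 (t - a)) v *
          (eps N ^ j) ^ a) * (Polynomial.X ^ (t - a) - Polynomial.X ^ a) := by
  set M := 2 * mult m n j + 1 with hM
  set u0 : Fin 2 → P1 := ![Polynomial.C (eps N ^ j) * Polynomial.X, 1] with hu0
  set u1 : Fin 2 → P1 := ![Polynomial.C (eps N ^ j), Polynomial.X] with hu1
  have hinv : (eps N ^ (-(j : ℤ))) * eps N ^ j = 1 := by
    rw [zpow_neg, zpow_natCast]
    exact inv_mul_cancel₀ (pow_ne_zero _ (eps_ne_zero N))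
  have hcomp : (theta u0).comp (dihRefl N j) = theta u1 := by
    apply MvPolynomial.algHom_ext
    intro i
    fin_cases i
    · show theta u0 (dihRefl N j (X 0)) = theta u1 (X 0)
      rw [dihRefl, aeval_X, if_pos rfl, map_mul, theta_C, theta, aeval_X, theta, aeval_X]
      simp [hu0, hu1]
    · show theta u0 (dihRefl N j (X 1)) = theta u1 (X 1)
      rw [dihRefl, aeval_X, if_neg (by decide : ¬(1 : Fin 2) = 0), map_mul, theta_C,
        theta, aeval_X, theta, aeval_X]
      simp only [hu0, hu1, Matrix.cons_val_zero, Matrix.cons_val_one, Matrix.head_cons]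
      rw [show (Polynomial.C (Polynomial.C (eps N ^ (-(j:ℤ)))) *
          (Polynomial.C (Polynomial.C (eps N ^ j) * Polynomial.X) * Polynomial.X) : P2) =
          Polynomial.C (Polynomial.C ((eps N ^ (-(j:ℤ))) * eps N ^ j) * Polynomial.X) *
            Polynomial.X from by simp only [map_mul]; ring]
      rw [hinv]
      simp
  have happ : theta u0 (dihRefl N j v) = theta u1 v := by
    rw [← AlgHom.comp_apply, hcomp]
  obtain ⟨g, hg⟩ := hv j hj
  have hmap : theta u1 v - theta u0 v =
      (theta u0 (zP - C (eps N ^ j) * wP)) ^ M * theta u0 g := by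
    rw [← happ, ← map_sub, hg, map_mul, map_pow]
  have hell : theta u0 (zP - C (eps N ^ j) * wP) =
      Polynomial.C (Polynomial.C (eps N ^ j) * (Polynomial.X - 1)) * Polynomial.X := by
    rw [map_sub, map_mul, theta_C]
    simp only [theta, zP, wP, aeval_X, hu0, Matrix.cons_val_zero, Matrix.cons_val_one,
      Matrix.head_cons]
    rw [mul_sub, map_sub, map_mul, map_one]
    ring
  have hsum : (theta u1 v).coeff t - (theta u0 v).coeff t =
      ∑ a ∈ range (t + 1),
        Polynomial.C (MvPolynomial.coeff (Finsupp.single 0 a + Finsupp.single 1 (t - a)) v *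
          (eps N ^ j) ^ a) * (Polynomial.X ^ (t - a) - Polynomial.X ^ a) := by
    rw [theta_coeff, theta_coeff, ← Finset.sum_sub_distrib]
    apply Finset.sum_congr rfl
    intro a ha
    simp only [hu0, hu1, Matrix.cons_val_zero, Matrix.cons_val_one, Matrix.head_cons,
      one_pow, mul_one, mul_pow, ← Polynomial.C_pow, map_mul]
    ring
  have hcoeff := congrArg (fun q : P2 => q.coeff t) hmap
  simp only [Polynomial.coeff_sub, hell] at hcoeff
  rw [hsum] at hcoeff
  rw [hcoeff]
  refine ⟨(Polynomial.C (eps N ^ j)) ^ M *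
    (if M ≤ t then (theta u0 g).coeff (t - M) else 0), ?_⟩
  rw [mul_pow, ← Polynomial.C_pow, mul_assoc, Polynomial.coeff_C_mul,
    mul_comm (Polynomial.X ^ M : P2), Polynomial.coeff_mul_X_pow']
  rw [mul_pow]
  ring


lemma sum_multiples (Nn T : ℕ) (hN : 1 ≤ Nn) (f : ℕ → P1) :
    ∑ a ∈ range (Nn * T + 1), (if Nn ∣ a then f a else 0) = ∑ b ∈ range (T + 1), f (Nn * b) := by
  rw [← Finset.sum_filter]
  refine Finset.sum_nbij' (fun a => a / Nn) (fun b => Nn * b) ?_ ?_ ?_ ?_ ?_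
  · intro a ha
    simp only [Finset.mem_filter, Finset.mem_range] at ha
    obtain ⟨ha1, k, rfl⟩ := ha
    rw [Nat.mul_div_cancel_left _ (by omega : 0 < Nn)]
    refine Finset.mem_range.mpr ?_
    by_contra hk
    have h1 : T + 1 ≤ k := by omega
    have h2 : Nn * (T+1) ≤ Nn * k := Nat.mul_le_mul_left _ h1
    rw [Nat.mul_add, Nat.mul_one] at h2
    omega
  · intro b hb
    simp only [Finset.mem_range] at hb
    refine Finset.mem_filter.mpr ⟨Finset.mem_range.mpr ?_, ⟨b, rfl⟩⟩
    have h2 : Nn * b ≤ Nn * T := Nat.mul_le_mul_left _ (by omega)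
    omega
  · intro a ha
    simp only [Finset.mem_filter] at ha
    exact Nat.mul_div_cancel' ha.2
  · intro b hb
    exact Nat.mul_div_cancel_left _ (by omega : 0 < Nn)
  · intro a ha
    simp only [Finset.mem_filter] at ha
    rw [Nat.mul_div_cancel' ha.2]

lemma bridge_part (N m n T par : ℕ) (hN : 1 ≤ N) (hpar : par < 2) (v : R2)
    (hv : IsQuasiInv N m n v) :
    (Polynomial.X - 1 : P1) ^ (2 * mult m n par + 1) ∣
      ∑ b ∈ range (T + 1),
        Polynomial.C ((-1 : ℂ) ^ (par * b) *
            MvPolynomial.coeff (Finsupp.single 0 (N * b) + Finsupp.single 1 (N * (T - b))) v) *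
          ((Polynomial.X : P1) ^ (N * (T - b)) - Polynomial.X ^ (N * b)) := by
  set t := N * T with ht
  set cpart : ℕ → ℂ :=
    fun a => MvPolynomial.coeff (Finsupp.single 0 a + Finsupp.single 1 (t - a)) v with hcp
  set E : ℕ → P1 := fun a => Polynomial.X ^ (t - a) - Polynomial.X ^ a with hE
  have hexp : ∀ i a : ℕ, (eps N ^ (2*i+par))^a = eps N ^ (par*a) * ((eps N ^ 2)^a)^i := by
    intro i a
    calc (eps N ^ (2*i+par))^a = eps N ^ ((2*i+par)*a) := by rw [← pow_mul]
      _ = eps N ^ (par*a + 2*a*i) := by congr 1; ring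
      _ = eps N ^ (par*a) * ((eps N ^ 2)^a)^i := by
          rw [← pow_mul, ← pow_mul, ← pow_add]
          congr 1
          ring
  have key : ∀ i ∈ range N, (Polynomial.X - 1 : P1) ^ (2 * mult m n par + 1) ∣
      ∑ a ∈ range (t+1), Polynomial.C (cpart a * (eps N ^ (2*i+par))^a) * E a := by
    intro i hi
    have hi' : i < N := Finset.mem_range.mp hi
    have hmult : mult m n (2*i+par) = mult m n par := by
      have hpareq : Even (2*i+par) ↔ Even par := by
        constructor <;> intro h
        · rcases h with ⟨k, hk⟩; exact ⟨k - i, by omega⟩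
        · rcases h with ⟨k, hk⟩; exact ⟨i + k, by omega⟩
      unfold mult
      by_cases hp : Even par
      · rw [if_pos hp, if_pos (hpareq.mpr hp)]
      · rw [if_neg hp, if_neg (fun hc => hp (hpareq.mp hc))]
    rw [← hmult]
    exact mirror_dvd N m n v hv t (2*i+par) (by omega)
  have hdvdsum := Finset.dvd_sum key
  have hinner : ∀ a ∈ range (t+1),
      ∑ i ∈ range N, Polynomial.C (cpart a * (eps N ^ (2*i+par))^a) * E a
      = if N ∣ a then Polynomial.C ((N:ℂ) * (eps N ^ (par*a) * cpart a)) * E a else 0 := by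
    intro a _
    rw [← Finset.sum_mul, ← map_sum]
    have hs : ∑ i ∈ range N, cpart a * (eps N ^ (2*i+par))^a
        = cpart a * eps N ^ (par*a) * (if N ∣ a then (N:ℂ) else 0) := by
      simp_rw [hexp, ← mul_assoc]
      rw [← Finset.mul_sum, eps_geom_sum N hN a]
    rw [hs]
    by_cases hdvd : N ∣ a
    · simp only [hdvd, if_true]
      rw [show cpart a * eps N ^ (par*a) * (N:ℂ) = (N:ℂ) * (eps N ^ (par*a) * cpart a) by ring]
    · simp [hdvd]
  have hswap : ∑ i ∈ range N, ∑ a ∈ range (t+1),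
        Polynomial.C (cpart a * (eps N ^ (2*i+par))^a) * E a
      = ∑ a ∈ range (t+1),
          (if N ∣ a then Polynomial.C ((N:ℂ) * (eps N ^ (par*a) * cpart a)) * E a else 0) := by
    rw [Finset.sum_comm]
    exact Finset.sum_congr rfl hinner
  rw [hswap, ht, sum_multiples N T hN _] at hdvdsum
  have hterm : ∀ b ∈ range (T+1),
      Polynomial.C ((N:ℂ) * (eps N ^ (par*(N*b)) * cpart (N*b))) * E (N*b)
      = Polynomial.C (N:ℂ) *
        (Polynomial.C ((-1 : ℂ) ^ (par * b) *
            MvPolynomial.coeff (Finsupp.single 0 (N * b) + Finsupp.single 1 (N * (T - b))) v) *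
          ((Polynomial.X : P1) ^ (N * (T - b)) - Polynomial.X ^ (N * b))) := by
    intro b hb
    have hbT : b ≤ T := Nat.lt_succ_iff.mp (Finset.mem_range.mp hb)
    obtain ⟨d, rfl⟩ : ∃ d, T = b + d := ⟨T - b, by omega⟩
    have hsub : t - N * b = N * (b + d - b) := by
      rw [ht, Nat.mul_add]
      simp [Nat.add_sub_cancel_left]
    have hepsb : eps N ^ (par*(N*b)) = (-1 : ℂ) ^ (par * b) := by
      rw [show par*(N*b) = N*(par*b) by ring, pow_mul, eps_pow_N N hN]
    rw [hE, hcp]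
    simp only [hsub, hepsb]
    rw [map_mul, map_mul]
    ring
  rw [Finset.sum_congr rfl hterm, ← Finset.mul_sum] at hdvdsum
  -- cancel C N
  have hNne : (N:ℂ) ≠ 0 := Nat.cast_ne_zero.mpr (by omega)
  have := hdvdsum.mul_left (Polynomial.C ((N:ℂ)⁻¹))
  rwa [← mul_assoc, ← map_mul, inv_mul_cancel₀ hNne, map_one, one_mul] at this


lemma dvd_uncomp (Nn K : ℕ) (hN : 1 ≤ Nn) (P : P1)
    (h : (Polynomial.X - 1 : P1) ^ K ∣ P.comp (Polynomial.X ^ Nn)) :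
    (Polynomial.X - 1 : P1) ^ K ∣ P := by
  by_cases hP : P = 0
  · simp [hP]
  obtain ⟨q, hq, hndvd⟩ := P.exists_eq_pow_rootMultiplicity_mul_and_not_dvd hP 1
  set r := P.rootMultiplicity 1 with hr
  have hXne : (Polynomial.X - 1 : P1) ≠ 0 := by
    rw [show (1 : P1) = Polynomial.C 1 from (Polynomial.C_1).symm]
    exact Polynomial.X_sub_C_ne_zero 1
  have hcomp : P.comp (Polynomial.X ^ Nn) =
      (Polynomial.X - 1) ^ r *
        ((∑ i ∈ range Nn, Polynomial.X ^ i) ^ r * q.comp (Polynomial.X ^ Nn)) := by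
    conv_lhs => rw [hq]
    rw [Polynomial.mul_comp, Polynomial.pow_comp, Polynomial.sub_comp, Polynomial.X_comp,
      Polynomial.C_comp, Polynomial.C_1, ← geom_sum_mul, mul_pow]
    ring
  have hUeval : Polynomial.eval 1
      ((∑ i ∈ range Nn, Polynomial.X ^ i) ^ r * q.comp (Polynomial.X ^ Nn)) ≠ 0 := by
    rw [Polynomial.eval_mul, Polynomial.eval_pow, Polynomial.eval_comp, Polynomial.eval_pow,
      Polynomial.eval_X, one_pow, Polynomial.eval_finset_sum]
    simp only [Polynomial.eval_pow, Polynomial.eval_X, one_pow, Finset.sum_const,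
      Finset.card_range, nsmul_eq_mul, mul_one]
    refine mul_ne_zero (pow_ne_zero _ (Nat.cast_ne_zero.mpr (by omega))) ?_
    intro hc
    apply hndvd
    rw [Polynomial.dvd_iff_isRoot]
    exact hc
  have hKr : K ≤ r := by
    by_contra hlt
    have h1 : (Polynomial.X - 1 : P1) ^ (r + 1) ∣ P.comp (Polynomial.X ^ Nn) :=
      dvd_trans (pow_dvd_pow _ (by omega)) h
    rw [hcomp, pow_succ] at h1
    have h2 := (mul_dvd_mul_iff_left (pow_ne_zero r hXne)).mp h1
    apply hUeval
    have h2' : (Polynomial.X - Polynomial.C 1 : P1) ∣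
        (∑ i ∈ range Nn, Polynomial.X ^ i) ^ r * q.comp (Polynomial.X ^ Nn) := by
      rw [Polynomial.C_1]; exact h2
    exact Polynomial.dvd_iff_isRoot.mp h2'
  calc (Polynomial.X - 1 : P1) ^ K ∣ (Polynomial.X - 1) ^ r := pow_dvd_pow _ hKr
    _ ∣ P := ⟨q, hq⟩

lemma comp_sumform (Nn T : ℕ) (g : ℕ → ℂ) :
    (∑ b ∈ range (T + 1),
        Polynomial.C (g b) * ((Polynomial.X : P1) ^ (T - b) - Polynomial.X ^ b)).comp
      (Polynomial.X ^ Nn)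
      = ∑ b ∈ range (T + 1),
        Polynomial.C (g b) * ((Polynomial.X : P1) ^ (Nn * (T - b)) - Polynomial.X ^ (Nn * b)) := by
  rw [Polynomial.comp, Polynomial.eval₂_finset_sum]
  apply Finset.sum_congr rfl
  intro b hb
  rw [← Polynomial.comp, Polynomial.mul_comp, Polynomial.C_comp, Polynomial.sub_comp,
    Polynomial.pow_comp, Polynomial.pow_comp, Polynomial.X_comp, ← pow_mul, ← pow_mul]

lemma coeff_top (T : ℕ) (hT : 1 ≤ T) (g : ℕ → ℂ) :
    (∑ b ∈ range (T + 1),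
        Polynomial.C (g b) * ((Polynomial.X : P1) ^ (T - b) - Polynomial.X ^ b)).coeff T
      = g 0 - g T := by
  rw [Polynomial.finset_sum_coeff]
  rw [Finset.sum_congr rfl
    (g := fun b => (if b = 0 then g b else 0) - (if b = T then g b else 0)) ?_]
  · rw [Finset.sum_sub_distrib, Finset.sum_ite_eq' (range (T+1)) 0 g,
      Finset.sum_ite_eq' (range (T+1)) T g]
    rw [if_pos (Finset.mem_range.mpr (by omega)), if_pos (Finset.mem_range.mpr (by omega))]
  · intro b hb
    have hbT : b ≤ T := Nat.lt_succ_iff.mp (Finset.mem_range.mp hb)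
    rw [Polynomial.coeff_C_mul, Polynomial.coeff_sub, Polynomial.coeff_X_pow,
      Polynomial.coeff_X_pow]
    by_cases hb0 : b = 0
    · subst hb0
      rw [if_neg (by omega : ¬T = 0), if_neg (by omega : ¬(0:ℕ) = T)]
      simp
    · by_cases hbT' : b = T
      · subst hbT'
        rw [if_neg hb0, if_neg (by omega : ¬b = b - b), if_pos rfl, if_pos rfl]
        simp
      · rw [if_neg hb0, if_neg (by omega : ¬T = T - b), if_neg (by omega : ¬T = b),
          if_neg (fun hc => hbT' hc)]
        simp

lemma deg_bound (T : ℕ) (g : ℕ → ℂ) :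
    (∑ b ∈ range (T + 1),
        Polynomial.C (g b) * ((Polynomial.X : P1) ^ (T - b) - Polynomial.X ^ b)).natDegree ≤ T := by
  refine Polynomial.natDegree_sum_le_of_forall_le _ _ ?_
  intro b hb
  have hbT : b ≤ T := Nat.lt_succ_iff.mp (Finset.mem_range.mp hb)
  refine le_trans (Polynomial.natDegree_C_mul_le _ _) ?_
  refine le_trans (Polynomial.natDegree_sub_le _ _) ?_
  simp [Polynomial.natDegree_X_pow]
  omega

lemma natDegree_X_sub_one_pow (K : ℕ) : ((Polynomial.X - 1 : P1) ^ K).natDegree = K := by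
  rw [show (1 : P1) = Polynomial.C 1 from (Polynomial.C_1).symm, Polynomial.natDegree_pow,
    Polynomial.natDegree_X_sub_C, mul_one]


lemma natDegree_X_add_one_pow (K : ℕ) : ((Polynomial.X + 1 : P1) ^ K).natDegree = K := by
  rw [show (Polynomial.X + 1 : P1) = Polynomial.X - Polynomial.C (-1) by
      rw [map_neg, Polynomial.C_1, sub_neg_eq_add]]
  rw [Polynomial.natDegree_pow, Polynomial.natDegree_X_sub_C, mul_one]

lemma Fhat_Ghat_dvd (N m n T : ℕ) (hN : 1 ≤ N) (v : R2) (hv : IsQuasiInv N m n v) :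
    ((Polynomial.X - 1 : P1) ^ (2*m+1) ∣
      ∑ b ∈ range (T+1),
        Polynomial.C (MvPolynomial.coeff
            (Finsupp.single 0 (N*b) + Finsupp.single 1 (N*(T-b))) v) *
          ((Polynomial.X : P1)^(T-b) - Polynomial.X^b)) ∧
    ((Polynomial.X - 1 : P1) ^ (2*n+1) ∣
      ∑ b ∈ range (T+1),
        Polynomial.C ((-1:ℂ)^b * MvPolynomial.coeff
            (Finsupp.single 0 (N*b) + Finsupp.single 1 (N*(T-b))) v) *
          ((Polynomial.X : P1)^(T-b) - Polynomial.X^b)) := by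
  constructor
  · apply dvd_uncomp N _ hN
    rw [comp_sumform]
    have h := bridge_part N m n T 0 hN (by norm_num) v hv
    have hm0 : mult m n 0 = m := by simp [mult]
    rw [hm0] at h
    simpa using h
  · apply dvd_uncomp N _ hN
    rw [comp_sumform]
    have h := bridge_part N m n T 1 hN (by norm_num) v hv
    have hm1 : mult m n 1 = n := by simp [mult, Nat.not_even_one]
    rw [hm1] at h
    simpa using h

lemma ccT_eq (N T : ℕ) (v : R2) :
    MvPolynomial.coeff (Finsupp.single 0 (N*T) + Finsupp.single 1 (N*(T-T))) v
      = MvPolynomial.coeff (Finsupp.single 0 (N*T)) v := by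
  rw [Nat.sub_self, Nat.mul_zero, Finsupp.single_zero, add_zero]

lemma cc0_eq (N T : ℕ) (v : R2) :
    MvPolynomial.coeff (Finsupp.single 0 (N*0) + Finsupp.single 1 (N*(T-0))) v
      = MvPolynomial.coeff (Finsupp.single 1 (N*T)) v := by
  rw [Nat.mul_zero, Finsupp.single_zero, zero_add, Nat.sub_zero]

lemma C1 (N m n : ℕ) (hN : 1 ≤ N) (hmn : n < m) (hn : 1 ≤ n) (v : R2)
    (hv : IsQuasiInv N m n v) :
    MvPolynomial.coeff (Finsupp.single 0 (N*(2*n-1))) v = 0 := by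
  set T := 2*n - 1 with hT
  have hT1 : 1 ≤ T := by omega
  obtain ⟨hF, hG⟩ := Fhat_Ghat_dvd N m n T hN v hv
  have hFz := Polynomial.eq_zero_of_dvd_of_natDegree_lt hF
    (by rw [natDegree_X_sub_one_pow]
        exact lt_of_le_of_lt (deg_bound T _) (by omega))
  have hGz := Polynomial.eq_zero_of_dvd_of_natDegree_lt hG
    (by rw [natDegree_X_sub_one_pow]
        exact lt_of_le_of_lt (deg_bound T _) (by omega))
  have h1 := coeff_top T hT1
    (fun b => MvPolynomial.coeff (Finsupp.single 0 (N*b) + Finsupp.single 1 (N*(T-b))) v)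
  have h2 := coeff_top T hT1
    (fun b => (-1:ℂ)^b * MvPolynomial.coeff
      (Finsupp.single 0 (N*b) + Finsupp.single 1 (N*(T-b))) v)
  rw [hFz] at h1
  rw [hGz] at h2
  simp only [Polynomial.coeff_zero] at h1 h2
  have hodd : ((-1:ℂ))^T = -1 := Odd.neg_one_pow ⟨n-1, by omega⟩
  rw [hodd] at h2
  simp only [pow_zero, one_mul] at h2
  rw [← ccT_eq N T v]
  linear_combination (h1 - h2) / 2

lemma C2 (N m n T : ℕ) (hN : 1 ≤ N) (hT1 : 1 ≤ T) (hTm : T < 2*m+1) (v : R2)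
    (hv : IsQuasiInv N m n v) :
    MvPolynomial.coeff (Finsupp.single 0 (N*T)) v
      = MvPolynomial.coeff (Finsupp.single 1 (N*T)) v := by
  obtain ⟨hF, _⟩ := Fhat_Ghat_dvd N m n T hN v hv
  have hFz := Polynomial.eq_zero_of_dvd_of_natDegree_lt hF
    (by rw [natDegree_X_sub_one_pow]
        exact lt_of_le_of_lt (deg_bound T _) (by omega))
  have h1 := coeff_top T hT1
    (fun b => MvPolynomial.coeff (Finsupp.single 0 (N*b) + Finsupp.single 1 (N*(T-b))) v)
  rw [hFz] at h1
  simp only [Polynomial.coeff_zero] at h1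
  rw [← ccT_eq N T v, ← cc0_eq N T v]
  linear_combination h1

lemma C3 (N m n : ℕ) (hN : 1 ≤ N) (hm : 1 ≤ m) (v : R2) (hv : IsQuasiInv N m n v) :
    MvPolynomial.coeff (Finsupp.single 0 (N*(2*m+2*n))) v
      = MvPolynomial.coeff (Finsupp.single 1 (N*(2*m+2*n))) v := by
  set T := 2*m + 2*n with hT
  have hT1 : 1 ≤ T := by omega
  obtain ⟨hF, hG⟩ := Fhat_Ghat_dvd N m n T hN v hv
  set gF : ℕ → ℂ := fun b => MvPolynomial.coeff
    (Finsupp.single 0 (N*b) + Finsupp.single 1 (N*(T-b))) v with hgF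
  -- G = F.comp (-X)
  have hGF : (∑ b ∈ range (T+1), Polynomial.C ((-1:ℂ)^b * gF b) *
        ((Polynomial.X : P1)^(T-b) - Polynomial.X^b))
      = (∑ b ∈ range (T+1), Polynomial.C (gF b) *
        ((Polynomial.X : P1)^(T-b) - Polynomial.X^b)).comp (-Polynomial.X) := by
    rw [Polynomial.comp, Polynomial.eval₂_finset_sum]
    apply Finset.sum_congr rfl
    intro b hb
    have hbT : b ≤ T := Nat.lt_succ_iff.mp (Finset.mem_range.mp hb)
    rw [← Polynomial.comp, Polynomial.mul_comp, Polynomial.C_comp, Polynomial.sub_comp,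
      Polynomial.pow_comp, Polynomial.pow_comp, Polynomial.X_comp]
    rw [neg_pow (Polynomial.X : P1) (T-b), neg_pow (Polynomial.X : P1) b]
    have hsign : ((-1 : P1)) ^ (T-b) = ((-1 : P1)) ^ b := by
      rcases Nat.even_or_odd b with hb2 | hb2
      · rw [Even.neg_one_pow hb2, Even.neg_one_pow (by
          rw [Nat.even_iff] at hb2 ⊢
          omega)]
      · rw [Odd.neg_one_pow hb2, Odd.neg_one_pow (by
          rw [Nat.odd_iff] at hb2 ⊢
          omega)]
    rw [hsign]
    rw [show Polynomial.C ((-1:ℂ)^b * gF b) = Polynomial.C (gF b) * ((-1:P1))^b by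
      rw [map_mul, mul_comm]
      congr 1
      rw [map_pow, map_neg, Polynomial.C_1]]
    ring
  rw [hGF] at hG
  -- transport along comp (-X)
  obtain ⟨e, he⟩ := hG
  have hFexp : (∑ b ∈ range (T+1), Polynomial.C (gF b) *
      ((Polynomial.X : P1)^(T-b) - Polynomial.X^b))
      = (-Polynomial.X - 1)^(2*n+1) * e.comp (-Polynomial.X) := by
    have := congrArg (fun p : P1 => p.comp (-Polynomial.X)) he
    rw [Polynomial.comp_assoc, Polynomial.neg_comp, Polynomial.X_comp, neg_neg,
      Polynomial.comp_X] at this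
    rw [this, Polynomial.mul_comp, Polynomial.pow_comp, Polynomial.sub_comp,
      Polynomial.X_comp, Polynomial.one_comp]
  have hplus : (Polynomial.X + 1 : P1)^(2*n+1) ∣
      ∑ b ∈ range (T+1), Polynomial.C (gF b) *
        ((Polynomial.X : P1)^(T-b) - Polynomial.X^b) := by
    refine ⟨(-1:P1)^(2*n+1) * e.comp (-Polynomial.X), ?_⟩
    rw [hFexp, show (-Polynomial.X - 1 : P1) = -(Polynomial.X + 1) by ring, neg_pow]
    ring
  have hcop : IsCoprime ((Polynomial.X - 1 : P1)^(2*m+1)) ((Polynomial.X + 1 : P1)^(2*n+1)) := by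
    apply IsCoprime.pow
    have h1 : IsCoprime (Polynomial.X - Polynomial.C (1:ℂ)) (Polynomial.X - Polynomial.C (-1:ℂ)) :=
      Polynomial.isCoprime_X_sub_C_of_isUnit_sub (by
        rw [sub_neg_eq_add]
        exact isUnit_iff_ne_zero.mpr (by norm_num))
    rw [Polynomial.C_1, map_neg, Polynomial.C_1, sub_neg_eq_add] at h1
    exact h1
  have hdvd := hcop.mul_dvd hF hplus
  have hFz := Polynomial.eq_zero_of_dvd_of_natDegree_lt hdvd (by
    rw [Polynomial.natDegree_mul (pow_ne_zero _ (by
        rw [show (1 : P1) = Polynomial.C 1 from (Polynomial.C_1).symm]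
        exact Polynomial.X_sub_C_ne_zero 1))
      (pow_ne_zero _ (by
        rw [show (Polynomial.X + 1 : P1) = Polynomial.X - Polynomial.C (-1) by
            rw [map_neg, Polynomial.C_1, sub_neg_eq_add]]
        exact Polynomial.X_sub_C_ne_zero (-1)))]
    rw [natDegree_X_sub_one_pow, natDegree_X_add_one_pow]
    exact lt_of_le_of_lt (deg_bound T _) (by omega))
  have h1 := coeff_top T hT1 gF
  rw [hFz] at h1
  simp only [Polynomial.coeff_zero] at h1
  rw [← ccT_eq N T v, ← cc0_eq N T v]
  have h0 : gF 0 = MvPolynomial.coeff (Finsupp.single 0 (N*0) + Finsupp.single 1 (N*(T-0))) v := rfl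
  have hTT : gF T = MvPolynomial.coeff (Finsupp.single 0 (N*T) + Finsupp.single 1 (N*(T-T))) v := rfl
  rw [← h0, ← hTT]
  linear_combination h1


def pii (i : Fin 2) : R2 →ₐ[ℂ] Polynomial ℂ :=
  aeval (fun k : Fin 2 => if k = i then Polynomial.X else 0)

lemma eq_single_iff0 (d : Fin 2 →₀ ℕ) (D : ℕ) :
    d = Finsupp.single 0 D ↔ (d 0 = D ∧ d 1 = 0) := by
  constructor
  · rintro rfl
    refine ⟨by simp, ?_⟩
    rw [Finsupp.single_apply, if_neg (by decide : ¬(0:Fin 2) = 1)]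
  · rintro ⟨h0, h1⟩
    ext k
    fin_cases k
    · simpa using h0
    · simpa [Finsupp.single_apply] using h1
  
lemma eq_single_iff1 (d : Fin 2 →₀ ℕ) (D : ℕ) :
    d = Finsupp.single 1 D ↔ (d 1 = D ∧ d 0 = 0) := by
  constructor
  · rintro rfl
    refine ⟨by simp, ?_⟩
    rw [Finsupp.single_apply, if_neg (by decide : ¬(1:Fin 2) = 0)]
  · rintro ⟨h1, h0⟩
    ext k
    fin_cases k
    · simpa [Finsupp.single_apply] using h0
    · simpa using h1

lemma pii_coeff0 (p : R2) (D : ℕ) :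
    (pii 0 p).coeff D = MvPolynomial.coeff (Finsupp.single 0 D) p := by
  induction p using MvPolynomial.induction_on' with
  | add p q hp hq =>
    simp [map_add, Polynomial.coeff_add, MvPolynomial.coeff_add, hp, hq]
  | monomial d r =>
    rw [pii, aeval_monomial, Finsupp.prod_fintype _ _ (fun k => pow_zero _), Fin.prod_univ_two]
    rw [show (if (0:Fin 2) = 0 then (Polynomial.X : Polynomial ℂ) else 0) = Polynomial.X
        from if_pos rfl,
      show (if (1:Fin 2) = 0 then (Polynomial.X : Polynomial ℂ) else 0) = 0
        from if_neg (by decide)]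
    rw [MvPolynomial.coeff_monomial]
    by_cases h1 : d 1 = 0
    · rw [h1, pow_zero, mul_one]
      rw [show (algebraMap ℂ (Polynomial ℂ)) r = Polynomial.C r from rfl]
      rw [Polynomial.coeff_C_mul, Polynomial.coeff_X_pow]
      by_cases h0 : d 0 = D
      · rw [if_pos h0.symm, if_pos ((eq_single_iff0 d D).mpr ⟨h0, h1⟩), mul_one]
      · rw [if_neg (fun hc => h0 hc.symm),
          if_neg (fun hc => h0 ((eq_single_iff0 d D).mp hc).1), mul_zero]
    · rw [zero_pow h1, mul_zero, mul_zero, Polynomial.coeff_zero,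
        if_neg (fun hc => h1 ((eq_single_iff0 d D).mp hc).2)]

lemma pii_coeff1 (p : R2) (D : ℕ) :
    (pii 1 p).coeff D = MvPolynomial.coeff (Finsupp.single 1 D) p := by
  induction p using MvPolynomial.induction_on' with
  | add p q hp hq =>
    simp [map_add, Polynomial.coeff_add, MvPolynomial.coeff_add, hp, hq]
  | monomial d r =>
    rw [pii, aeval_monomial, Finsupp.prod_fintype _ _ (fun k => pow_zero _), Fin.prod_univ_two]
    rw [show (if (1:Fin 2) = 1 then (Polynomial.X : Polynomial ℂ) else 0) = Polynomial.X
        from if_pos rfl,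
      show (if (0:Fin 2) = 1 then (Polynomial.X : Polynomial ℂ) else 0) = 0
        from if_neg (by decide)]
    rw [MvPolynomial.coeff_monomial]
    by_cases h0 : d 0 = 0
    · rw [h0, pow_zero, one_mul]
      rw [show (algebraMap ℂ (Polynomial ℂ)) r = Polynomial.C r from rfl]
      rw [Polynomial.coeff_C_mul, Polynomial.coeff_X_pow]
      by_cases h1 : d 1 = D
      · rw [if_pos h1.symm, if_pos ((eq_single_iff1 d D).mpr ⟨h1, h0⟩), mul_one]
      · rw [if_neg (fun hc => h1 hc.symm),
          if_neg (fun hc => h1 ((eq_single_iff1 d D).mp hc).1), mul_zero]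
    · rw [zero_pow h0, zero_mul, mul_zero, Polynomial.coeff_zero,
        if_neg (fun hc => h0 ((eq_single_iff1 d D).mp hc).2)]

lemma pii0_z : pii 0 zP = Polynomial.X := by simp [pii, zP]
lemma pii0_w : pii 0 wP = 0 := by
  rw [pii, wP, aeval_X, if_neg (by decide : ¬(1:Fin 2) = 0)]
lemma pii1_z : pii 1 zP = 0 := by
  rw [pii, zP, aeval_X, if_neg (by decide : ¬(0:Fin 2) = 1)]
lemma pii1_w : pii 1 wP = Polynomial.X := by simp [pii, wP]

lemma rhs_coeff0 (Nq D : ℕ) (hN : 1 ≤ Nq) (u v : R2) :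
    MvPolynomial.coeff (Finsupp.single 0 D)
        (u * (zP * wP) + v * (zP ^ (2*Nq) + wP ^ (2*Nq)))
      = if 2*Nq ≤ D then MvPolynomial.coeff (Finsupp.single 0 (D - 2*Nq)) v else 0 := by
  rw [← pii_coeff0, map_add, map_mul, map_mul, map_mul, map_add, map_pow, map_pow,
    pii0_z, pii0_w]
  rw [mul_zero, mul_zero, zero_add, zero_pow (by omega : 2*Nq ≠ 0), add_zero]
  rw [Polynomial.coeff_mul_X_pow']
  by_cases h : 2*Nq ≤ D
  · rw [if_pos h, if_pos h, pii_coeff0]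
  · rw [if_neg h, if_neg h]

lemma rhs_coeff1 (Nq D : ℕ) (hN : 1 ≤ Nq) (u v : R2) :
    MvPolynomial.coeff (Finsupp.single 1 D)
        (u * (zP * wP) + v * (zP ^ (2*Nq) + wP ^ (2*Nq)))
      = if 2*Nq ≤ D then MvPolynomial.coeff (Finsupp.single 1 (D - 2*Nq)) v else 0 := by
  rw [← pii_coeff1, map_add, map_mul, map_mul, map_mul, map_add, map_pow, map_pow,
    pii1_z, pii1_w]
  rw [zero_mul, mul_zero, zero_add, zero_pow (by omega : 2*Nq ≠ 0), zero_add]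
  rw [Polynomial.coeff_mul_X_pow']
  by_cases h : 2*Nq ≤ D
  · rw [if_pos h, if_pos h, pii_coeff1]
  · rw [if_neg h, if_neg h]

lemma q1_coeff0 (Nq n : ℕ) (hN : 1 ≤ Nq) :
    MvPolynomial.coeff (Finsupp.single 0 (Nq*(2*n+1))) ((zP ^ Nq + wP ^ Nq) ^ (2*n+1)) = 1 := by
  rw [← pii_coeff0, map_pow, map_add, map_pow, map_pow, pii0_z, pii0_w]
  rw [zero_pow (by omega : Nq ≠ 0), add_zero, ← pow_mul, Polynomial.coeff_X_pow, if_pos rfl]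

lemma q2_coeff0 (Nq m : ℕ) (hN : 1 ≤ Nq) :
    MvPolynomial.coeff (Finsupp.single 0 (Nq*(2*m+1))) ((zP ^ Nq - wP ^ Nq) ^ (2*m+1)) = 1 := by
  rw [← pii_coeff0, map_pow, map_sub, map_pow, map_pow, pii0_z, pii0_w]
  rw [zero_pow (by omega : Nq ≠ 0), sub_zero, ← pow_mul, Polynomial.coeff_X_pow, if_pos rfl]

lemma q2_coeff1 (Nq m : ℕ) (hN : 1 ≤ Nq) :
    MvPolynomial.coeff (Finsupp.single 1 (Nq*(2*m+1))) ((zP ^ Nq - wP ^ Nq) ^ (2*m+1)) = -1 := by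
  rw [← pii_coeff1, map_pow, map_sub, map_pow, map_pow, pii1_z, pii1_w]
  rw [zero_pow (by omega : Nq ≠ 0), zero_sub, Odd.neg_pow ⟨m, by ring⟩, ← pow_mul,
    Polynomial.coeff_neg, Polynomial.coeff_X_pow, if_pos rfl]

lemma q3_coeff0 (Nq m n : ℕ) (hN : 1 ≤ Nq) :
    MvPolynomial.coeff (Finsupp.single 0 (Nq*(2*n+1) + Nq*(2*m+1)))
      ((zP ^ Nq + wP ^ Nq) ^ (2*n+1) * (zP ^ Nq - wP ^ Nq) ^ (2*m+1)) = 1 := by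
  rw [← pii_coeff0, map_mul, map_pow, map_pow, map_add, map_sub, map_pow, map_pow,
    pii0_z, pii0_w]
  rw [zero_pow (by omega : Nq ≠ 0), add_zero, sub_zero, ← pow_mul, ← pow_mul, ← pow_add,
    Polynomial.coeff_X_pow, if_pos rfl]

lemma q3_coeff1 (Nq m n : ℕ) (hN : 1 ≤ Nq) :
    MvPolynomial.coeff (Finsupp.single 1 (Nq*(2*n+1) + Nq*(2*m+1)))
      ((zP ^ Nq + wP ^ Nq) ^ (2*n+1) * (zP ^ Nq - wP ^ Nq) ^ (2*m+1)) = -1 := by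
  rw [← pii_coeff1, map_mul, map_pow, map_pow, map_add, map_sub, map_pow, map_pow,
    pii1_z, pii1_w]
  rw [zero_pow (by omega : Nq ≠ 0), zero_add, zero_sub, Odd.neg_pow ⟨m, by ring⟩,
    mul_neg, ← pow_mul, ← pow_mul, ← pow_add,
    Polynomial.coeff_neg, Polynomial.coeff_X_pow, if_pos rfl]

end QIDih


theorem q0_q1_q2_q3_not_mem_ideal (N m n : ℕ) (hN : 1 ≤ N) (hmn : n < m) :
    ¬ MemIdealI N m n 1 ∧
    ¬ MemIdealI N m n ((zP ^ N + wP ^ N) ^ (2 * n + 1)) ∧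
    ¬ MemIdealI N m n ((zP ^ N - wP ^ N) ^ (2 * m + 1)) ∧
    ¬ MemIdealI N m n ((zP ^ N + wP ^ N) ^ (2 * n + 1) * (zP ^ N - wP ^ N) ^ (2 * m + 1)) := by
  have hm1 : 1 ≤ m := by omega
  refine ⟨?_, ?_, ?_, ?_⟩
  · rintro ⟨u, v, hu, hv, heq⟩
    have h := congrArg (MvPolynomial.coeff (Finsupp.single (0 : Fin 2) 0)) heq
    rw [QIDih.rhs_coeff0 N 0 hN u v, if_neg (by omega)] at h
    rw [Finsupp.single_zero] at h
    simp only [MvPolynomial.coeff_zero_one] at h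
    exact one_ne_zero h
  · rintro ⟨u, v, hu, hv, heq⟩
    have h := congrArg (MvPolynomial.coeff (Finsupp.single (0 : Fin 2) (N * (2*n+1)))) heq
    rw [QIDih.rhs_coeff0 N (N * (2*n+1)) hN u v, QIDih.q1_coeff0 N n hN] at h
    by_cases hn : n = 0
    · subst hn
      rw [if_neg (by
        rw [show N * (2*0+1) = N by ring]
        omega)] at h
      exact one_ne_zero h
    · have hle : 2*N ≤ N * (2*n+1) := by
        calc 2*N = N*2 := by ring
        _ ≤ N * (2*n+1) := Nat.mul_le_mul_left _ (by omega)
      rw [if_pos hle] at h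
      have hsub : N * (2*n+1) - 2*N = N * (2*n-1) := by
        have he : N * (2*n+1) = N * (2*n-1) + 2*N := by
          obtain ⟨k, rfl⟩ : ∃ k, n = k + 1 := ⟨n - 1, by omega⟩
          have h2 : 2*(k+1)+1 = (2*k+1) + 2 := by ring
          have h3 : 2*(k+1)-1 = 2*k+1 := by omega
          rw [h2, h3, Nat.mul_add]
          ring
        omega
      rw [hsub, QIDih.C1 N m n hN hmn (by omega) v hv] at h
      exact one_ne_zero h
  · rintro ⟨u, v, hu, hv, heq⟩
    have hle : 2*N ≤ N * (2*m+1) := by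
      calc 2*N = N*2 := by ring
      _ ≤ N * (2*m+1) := Nat.mul_le_mul_left _ (by omega)
    have hsub : N * (2*m+1) - 2*N = N * (2*m-1) := by
      have he : N * (2*m+1) = N * (2*m-1) + 2*N := by
        obtain ⟨k, rfl⟩ : ∃ k, m = k + 1 := ⟨m - 1, by omega⟩
        have h2 : 2*(k+1)+1 = (2*k+1) + 2 := by ring
        have h3 : 2*(k+1)-1 = 2*k+1 := by omega
        rw [h2, h3, Nat.mul_add]
        ring
      omega
    have h0 := congrArg (MvPolynomial.coeff (Finsupp.single (0 : Fin 2) (N * (2*m+1)))) heq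
    rw [QIDih.rhs_coeff0 N (N * (2*m+1)) hN u v, QIDih.q2_coeff0 N m hN, if_pos hle, hsub] at h0
    have h1 := congrArg (MvPolynomial.coeff (Finsupp.single (1 : Fin 2) (N * (2*m+1)))) heq
    rw [QIDih.rhs_coeff1 N (N * (2*m+1)) hN u v, QIDih.q2_coeff1 N m hN, if_pos hle, hsub] at h1
    have hC := QIDih.C2 N m n (2*m-1) hN (by omega) (by omega) v hv
    rw [← h0, ← h1] at hC
    norm_num at hC
  · rintro ⟨u, v, hu, hv, heq⟩
    set D := N * (2*n+1) + N * (2*m+1) with hD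
    have hle : 2*N ≤ D := by
      have : N*1 ≤ N * (2*n+1) := Nat.mul_le_mul_left _ (by omega)
      have : N*1 ≤ N * (2*m+1) := Nat.mul_le_mul_left _ (by omega)
      omega
    have hsub : D - 2*N = N * (2*m+2*n) := by
      have he : D = N * (2*m+2*n) + 2*N := by rw [hD]; ring
      omega
    have h0 := congrArg (MvPolynomial.coeff (Finsupp.single (0 : Fin 2) D)) heq
    rw [QIDih.rhs_coeff0 N D hN u v, QIDih.q3_coeff0 N m n hN, if_pos hle, hsub] at h0
    have h1 := congrArg (MvPolynomial.coeff (Finsupp.single (1 : Fin 2) D)) heq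
    rw [QIDih.rhs_coeff1 N D hN u v, QIDih.q3_coeff1 N m n hN, if_pos hle, hsub] at h1
    have hC := QIDih.C3 N m n hN hm1 v hv
    rw [← h0, ← h1] at hC
    norm_num at hC
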